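/- Let L be a unimodular lattice with minimal norm at least 2, and M a sublattice of L with Gram matrix [[3,2,0],[2,3,0],[0,0,3]]. Let M^⊥ be the orthogonal complement of M in L and ρ the orthogonal projection onto M^⊥ ⊗ ℚ. Then the minimum norm of the dual lattice (M^⊥)* is at least 16/15, and every nonzero w ∈ (M^⊥)* of norm at most 2 satisfies w = ρ(w') for some w' ∈ L of norm exactly 2. -/

import Mathlib

open scoped RealInnerProductSpace

/-- The dual lattice of a set `N` inside its rational span. -/
def dualLat {n : ℕ} (N : Set (EuclideanSpace ℝ (Fin n))) : Set (EuclideanSpace ℝ (Fin n)) :=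
  {v | v ∈ Submodule.span ℚ N ∧ ∀ u ∈ N, ∃ k : ℤ, ⟪v, u⟫ = (k : ℝ)}

private lemma stmt18_lemA (k1 k2 : ℤ) : ∃ c1 c2 : ℤ,
    3*(k1-3*c1-2*c2)^2 - 4*(k1-3*c1-2*c2)*(k2-2*c1-3*c2) + 3*(k2-2*c1-3*c2)^2 ≤ 3 := by
  obtain ⟨t, s, hs, h5, hts⟩ : ∃ t s : ℤ, 0 ≤ s ∧ s < 5 ∧ k1 + k2 = 5*t + s :=
    ⟨(k1+k2)/5, (k1+k2)%5, by omega, by omega, by omega⟩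
  interval_cases s
  · refine ⟨3*t - k2, 3*t - k1, ?_⟩
    have h1 : k1-3*(3*t - k2)-2*(3*t - k1) = 0 := by omega
    have h2 : k2-2*(3*t - k2)-3*(3*t - k1) = 0 := by omega
    rw [h1, h2]; norm_num
  · refine ⟨3*t - k2, 3*t - k1 + 1, ?_⟩
    have h1 : k1-3*(3*t - k2)-2*(3*t - k1 + 1) = 1 := by omega
    have h2 : k2-2*(3*t - k2)-3*(3*t - k1 + 1) = 0 := by omega
    rw [h1, h2]; norm_num
  · refine ⟨3*t - k2 + 1, 3*t - k1 + 1, ?_⟩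
    have h1 : k1-3*(3*t - k2 + 1)-2*(3*t - k1 + 1) = 1 := by omega
    have h2 : k2-2*(3*t - k2 + 1)-3*(3*t - k1 + 1) = 1 := by omega
    rw [h1, h2]; norm_num
  · refine ⟨3*t - k2 + 2, 3*t - k1 + 2, ?_⟩
    have h1 : k1-3*(3*t - k2 + 2)-2*(3*t - k1 + 2) = -1 := by omega
    have h2 : k2-2*(3*t - k2 + 2)-3*(3*t - k1 + 2) = -1 := by omega
    rw [h1, h2]; norm_num
  · refine ⟨3*t - k2 + 3, 3*t - k1 + 2, ?_⟩
    have h1 : k1-3*(3*t - k2 + 3)-2*(3*t - k1 + 2) = -1 := by omega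
    have h2 : k2-2*(3*t - k2 + 3)-3*(3*t - k1 + 2) = 0 := by omega
    rw [h1, h2]; norm_num

private lemma stmt18_lemB (k : ℤ) : ∃ c : ℤ, (k - 3*c)^2 ≤ 1 := by
  obtain ⟨c, h1, h2⟩ : ∃ c : ℤ, -1 ≤ k - 3*c ∧ k - 3*c ≤ 1 := ⟨(k+1)/3, by omega, by omega⟩
  exact ⟨c, by nlinarith⟩

private lemma stmt18_span_inner_zero {n : ℕ} {S : Set (EuclideanSpace ℝ (Fin n))}
    {m : EuclideanSpace ℝ (Fin n)} (h : ∀ u ∈ S, ⟪u, m⟫ = 0) :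
    ∀ v ∈ Submodule.span ℝ S, ⟪v, m⟫ = 0 := by
  intro v hv
  have hle : Submodule.span ℝ S ≤ LinearMap.ker ((innerSL ℝ m).toLinearMap) := by
    rw [Submodule.span_le]
    intro u hu
    simp only [SetLike.mem_coe, LinearMap.mem_ker, ContinuousLinearMap.coe_coe, innerSL_apply_apply]
    rw [real_inner_comm]
    exact h u hu
  have := hle hv
  simp only [LinearMap.mem_ker, ContinuousLinearMap.coe_coe, innerSL_apply_apply] at this
  rw [real_inner_comm]
  exact this

set_option maxHeartbeats 2000000 in
private lemma stmt18_master (n : ℕ) (L : Submodule ℤ (EuclideanSpace ℝ (Fin n)))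
    (hfull : Submodule.span ℝ (L : Set (EuclideanSpace ℝ (Fin n))) = ⊤)
    (huni : ∀ v : EuclideanSpace ℝ (Fin n),
      v ∈ L ↔ ∀ u ∈ L, ∃ k : ℤ, ⟪v, u⟫ = (k : ℝ))
    (w : Fin 3 → EuclideanSpace ℝ (Fin n)) (hw : ∀ i, w i ∈ L)
    (hGram : ∀ i j, ⟪w i, w j⟫ = (!![3, 2, 0; 2, 3, 0; 0, 0, 3] : Matrix (Fin 3) (Fin 3) ℝ) i j)
    (x : EuclideanSpace ℝ (Fin n))
    (hx : x ∈ dualLat {v | v ∈ L ∧ ∀ i, ⟪v, w i⟫ = 0})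
    (hx0 : x ≠ 0) :
    ∃ z' m' : EuclideanSpace ℝ (Fin n), z' ∈ L ∧ z' = x + m' ∧ z' ≠ 0 ∧
      ⟪z', z'⟫ = ⟪x, x⟫ + ⟪m', m'⟫ ∧ ⟪m', m'⟫ ≤ 14 / 15 ∧
      x ∈ Submodule.span ℝ {v | v ∈ L ∧ ∀ i, ⟪v, w i⟫ = 0} ∧
      ∀ u ∈ {v | v ∈ L ∧ ∀ i, ⟪v, w i⟫ = 0}, ⟪u, m'⟫ = 0 := by
  classical
  set S : Set (EuclideanSpace ℝ (Fin n)) := {v | v ∈ L ∧ ∀ i, ⟪v, w i⟫ = 0} with hSdef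
  obtain ⟨hxQ, hxZ⟩ := hx
  have g00 : ⟪w 0, w 0⟫ = 3 := by simpa using hGram 0 0
  have g01 : ⟪w 0, w 1⟫ = 2 := by simpa using hGram 0 1
  have g02 : ⟪w 0, w 2⟫ = 0 := by simpa using hGram 0 2
  have g10 : ⟪w 1, w 0⟫ = 2 := by simpa using hGram 1 0
  have g11 : ⟪w 1, w 1⟫ = 3 := by simpa using hGram 1 1
  have g12 : ⟪w 1, w 2⟫ = 0 := by simpa using hGram 1 2
  have g20 : ⟪w 2, w 0⟫ = 0 := by simpa using hGram 2 0
  have g21 : ⟪w 2, w 1⟫ = 0 := by simpa using hGram 2 1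
  have g22 : ⟪w 2, w 2⟫ = 3 := by simpa using hGram 2 2
  -- x is orthogonal to the w i
  have hxw : ∀ i : Fin 3, ⟪x, w i⟫ = 0 := by
    intro i
    have hle : Submodule.span ℚ S ≤
        (LinearMap.ker ((innerSL ℝ (w i)).toLinearMap)).restrictScalars ℚ := by
      rw [Submodule.span_le]
      intro u hu
      simp only [Submodule.coe_restrictScalars, SetLike.mem_coe, LinearMap.mem_ker,
        ContinuousLinearMap.coe_coe, innerSL_apply_apply]
      rw [real_inner_comm]
      exact hu.2 i
    have := hle hxQ
    simp only [Submodule.restrictScalars_mem, LinearMap.mem_ker, ContinuousLinearMap.coe_coe,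
      innerSL_apply_apply] at this
    rw [real_inner_comm]
    exact this
  have hxspan : x ∈ Submodule.span ℝ S := by
    have hle : Submodule.span ℚ S ≤ (Submodule.span ℝ S).restrictScalars ℚ :=
      Submodule.span_le.mpr Submodule.subset_span
    exact hle hxQ
  -- projection onto the span of the w's
  let f : Fin 3 → (EuclideanSpace ℝ (Fin n) →ₗ[ℝ] ℝ) := fun i => (innerSL ℝ (w i)).toLinearMap
  set pW : EuclideanSpace ℝ (Fin n) →ₗ[ℝ] EuclideanSpace ℝ (Fin n) :=
    (((3/5 : ℝ) • f 0 - (2/5 : ℝ) • f 1).smulRight (w 0)) +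
    (((3/5 : ℝ) • f 1 - (2/5 : ℝ) • f 0).smulRight (w 1)) +
    (((1/3 : ℝ) • f 2).smulRight (w 2)) with hpWdef
  have hpW : ∀ v, pW v = ((3*⟪w 0, v⟫ - 2*⟪w 1, v⟫)/5) • w 0
      + ((3*⟪w 1, v⟫ - 2*⟪w 0, v⟫)/5) • w 1 + ((⟪w 2, v⟫)/3) • w 2 := by
    intro v
    simp only [hpWdef, LinearMap.add_apply, LinearMap.smulRight_apply, LinearMap.sub_apply,
      LinearMap.smul_apply, ContinuousLinearMap.coe_coe, innerSL_apply_apply, smul_eq_mul, f]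
    module
  have hexp3 : ∀ (a b c : ℝ) (j : Fin 3), ⟪a • w 0 + b • w 1 + c • w 2, w j⟫
      = a * ⟪w 0, w j⟫ + b * ⟪w 1, w j⟫ + c * ⟪w 2, w j⟫ := by
    intro a b c j
    simp [inner_add_left, inner_smul_left]
  have hcomm : ∀ (v : EuclideanSpace ℝ (Fin n)) (j : Fin 3), ⟪w j, v⟫ = ⟪v, w j⟫ :=
    fun v j => real_inner_comm _ _
  have hF1 : ∀ (v : EuclideanSpace ℝ (Fin n)) (i : Fin 3), ⟪v - pW v, w i⟫ = 0 := by
    intro v i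
    have e : ∀ j : Fin 3, ⟪v - pW v, w j⟫ = ⟪v, w j⟫ -
        (((3*⟪w 0, v⟫ - 2*⟪w 1, v⟫)/5) * ⟪w 0, w j⟫
        + ((3*⟪w 1, v⟫ - 2*⟪w 0, v⟫)/5) * ⟪w 1, w j⟫ + ((⟪w 2, v⟫)/3) * ⟪w 2, w j⟫) := by
      intro j
      rw [inner_sub_left, hpW, hexp3]
    have E0 : ⟪v - pW v, w 0⟫ = 0 := by
      rw [e 0, g00, g10, g20, hcomm v 0]; ring
    have E1 : ⟪v - pW v, w 1⟫ = 0 := by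
      rw [e 1, g01, g11, g21, hcomm v 1]; ring
    have E2 : ⟪v - pW v, w 2⟫ = 0 := by
      rw [e 2, g02, g12, g22, hcomm v 2]; ring
    fin_cases i
    · exact E0
    · exact E1
    · exact E2
  have hPl : ∀ l ∈ L, l - pW l ∈ Submodule.span ℝ S := by
    intro l hl
    obtain ⟨k0, hk0⟩ := (huni l).1 hl (w 0) (hw 0)
    obtain ⟨k1, hk1⟩ := (huni l).1 hl (w 1) (hw 1)
    obtain ⟨k2, hk2⟩ := (huni l).1 hl (w 2) (hw 2)
    set u : EuclideanSpace ℝ (Fin n) :=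
      (15 : ℤ) • l - ((9*k0-6*k1 : ℤ) • w 0 + (9*k1-6*k0 : ℤ) • w 1 + (5*k2 : ℤ) • w 2)
      with hudef
    have huL : u ∈ L := by
      refine L.sub_mem (L.smul_mem _ hl) (L.add_mem (L.add_mem ?_ ?_) ?_) <;>
        exact L.smul_mem _ (hw _)
    have hucast : u = ((15 : ℤ) : ℝ) • l - (((9*k0-6*k1 : ℤ) : ℝ) • w 0
        + ((9*k1-6*k0 : ℤ) : ℝ) • w 1 + ((5*k2 : ℤ) : ℝ) • w 2) := by
      rw [hudef]; simp only [Int.cast_smul_eq_zsmul]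
    have hexp4 : ∀ (j : Fin 3), ⟪u, w j⟫ = ((15 : ℤ) : ℝ) * ⟪l, w j⟫ -
        (((9*k0-6*k1 : ℤ) : ℝ) * ⟪w 0, w j⟫ + ((9*k1-6*k0 : ℤ) : ℝ) * ⟪w 1, w j⟫
          + ((5*k2 : ℤ) : ℝ) * ⟪w 2, w j⟫) := by
      intro j
      rw [hucast, inner_sub_left, inner_smul_left, hexp3]
      norm_num
    have huS : u ∈ S := by
      refine ⟨huL, fun i => ?_⟩
      have U0 : ⟪u, w 0⟫ = 0 := by rw [hexp4 0, g00, g10, g20, hk0]; push_cast; ring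
      have U1 : ⟪u, w 1⟫ = 0 := by rw [hexp4 1, g01, g11, g21, hk1]; push_cast; ring
      have U2 : ⟪u, w 2⟫ = 0 := by rw [hexp4 2, g02, g12, g22, hk2]; push_cast; ring
      fin_cases i
      · exact U0
      · exact U1
      · exact U2
    have hk0' : ⟪w 0, l⟫ = (k0 : ℝ) := by rw [real_inner_comm]; exact hk0
    have hk1' : ⟪w 1, l⟫ = (k1 : ℝ) := by rw [real_inner_comm]; exact hk1
    have hk2' : ⟪w 2, l⟫ = (k2 : ℝ) := by rw [real_inner_comm]; exact hk2
    have h15 : l - pW l = (15 : ℝ)⁻¹ • u := by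
      rw [hucast, hpW, hk0', hk1', hk2']
      push_cast
      module
    rw [h15]
    exact Submodule.smul_mem _ _ (Submodule.subset_span huS)
  have hspanT : ∀ v : EuclideanSpace ℝ (Fin n), (∀ i, ⟪v, w i⟫ = 0) →
      v ∈ Submodule.span ℝ S := by
    intro v hv
    have hpv : pW v = 0 := by
      rw [hpW, hcomm v 0, hcomm v 1, hcomm v 2, hv 0, hv 1, hv 2]
      norm_num
    have hv2 : v ∈ Submodule.map (LinearMap.id - pW) (Submodule.span ℝ
        (L : Set (EuclideanSpace ℝ (Fin n)))) := by
      rw [hfull]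
      exact ⟨v, trivial, by simp [hpv]⟩
    rw [Submodule.map_span] at hv2
    refine Submodule.span_le.mpr ?_ hv2
    rintro _ ⟨l, hl, rfl⟩
    simpa using hPl l hl
  -- discreteness and lattice structure
  have hsep : ∀ v ∈ L, v ≠ 0 → (1:ℝ) ≤ ‖v‖ := by
    intro v hv hv0
    obtain ⟨k, hk⟩ := (huni v).1 hv v hv
    have hpos : (0:ℝ) < ⟪v, v⟫ :=
      lt_of_le_of_ne real_inner_self_nonneg
        (fun h => hv0 ((inner_self_eq_zero (𝕜 := ℝ)).mp h.symm))
    have hk1 : (1:ℤ) ≤ k := by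
      have h1 : (0:ℝ) < (k:ℝ) := hk ▸ hpos
      have h2 : (0:ℤ) < k := by exact_mod_cast h1
      omega
    have h1 : (1:ℝ) ≤ ⟪v, v⟫ := by rw [hk]; exact_mod_cast hk1
    rw [real_inner_self_eq_norm_sq] at h1
    nlinarith [norm_nonneg v]
  haveI : DiscreteTopology L := by
    rw [discreteTopology_iff_isOpen_singleton]
    intro v
    rw [Metric.isOpen_singleton_iff]
    refine ⟨1, one_pos, fun u hu => ?_⟩
    rw [Subtype.dist_eq, dist_eq_norm] at hu
    by_contra hne
    have hmem : (u : EuclideanSpace ℝ (Fin n)) - v ∈ L := L.sub_mem u.2 v.2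
    have hne' : (u : EuclideanSpace ℝ (Fin n)) - v ≠ 0 := by
      rw [sub_ne_zero]
      intro h
      exact hne (Subtype.ext h)
    have := hsep _ hmem hne'
    linarith
  haveI : IsZLattice ℝ L := ⟨hfull⟩
  haveI : Module.Finite ℤ L := ZLattice.module_finite ℝ L
  haveI : Module.Free ℤ L := ZLattice.module_free ℝ L
  -- the sublattice N and the splitting
  let g3 : L →ₗ[ℤ] (Fin 3 → ℝ) :=
    { toFun := fun l => fun i => ⟪w i, (l : EuclideanSpace ℝ (Fin n))⟫
      map_add' := by intro a b; funext i; simp [inner_add_right]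
      map_smul' := by
        intro c a; funext i
        simp only [Submodule.coe_smul, RingHom.id_apply, Pi.smul_apply]
        rw [← Int.cast_smul_eq_zsmul ℝ c ((a : EuclideanSpace ℝ (Fin n))), inner_smul_right,
          ← Int.cast_smul_eq_zsmul ℝ c (⟪w i, (a : EuclideanSpace ℝ (Fin n))⟫), smul_eq_mul] }
  set Nsub : Submodule ℤ L := LinearMap.ker g3 with hNdef
  have hNmem : ∀ l : L, l ∈ Nsub ↔ ∀ i, ⟪(l : EuclideanSpace ℝ (Fin n)), w i⟫ = 0 := by
    intro l
    constructor
    · intro h i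
      have := congrFun (LinearMap.mem_ker.mp h) i
      rw [real_inner_comm]; exact this
    · intro h
      rw [LinearMap.mem_ker]; funext i
      show ⟪w i, (l : EuclideanSpace ℝ (Fin n))⟫ = 0
      rw [real_inner_comm]; exact h i
  haveI : Module.Finite ℤ (L ⧸ Nsub) :=
    Module.Finite.of_surjective Nsub.mkQ (Submodule.mkQ_surjective _)
  haveI : NoZeroSMulDivisors ℤ (L ⧸ Nsub) := by
    refine ⟨fun {c q} h => ?_⟩
    by_cases hc : c = 0
    · exact Or.inl hc
    right
    obtain ⟨l, rfl⟩ := Submodule.mkQ_surjective Nsub q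
    rw [← map_smul, Submodule.mkQ_apply, Submodule.Quotient.mk_eq_zero] at h
    have h2 : g3 (c • l) = 0 := h
    rw [map_smul] at h2
    have h3 : g3 l = 0 := by
      rcases smul_eq_zero.mp h2 with h | h
      · exact absurd h hc
      · exact h
    rw [Submodule.mkQ_apply, Submodule.Quotient.mk_eq_zero]
    exact h3
  haveI : Module.Free ℤ (L ⧸ Nsub) := Module.free_of_finite_type_torsion_free'
  obtain ⟨σ, hσ⟩ := Module.projective_lifting_property Nsub.mkQ LinearMap.id
    (Submodule.mkQ_surjective _)
  set ψ : L →ₗ[ℤ] L := LinearMap.id - σ ∘ₗ Nsub.mkQ with hψdef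
  have hψmem : ∀ l : L, ψ l ∈ Nsub := by
    intro l
    have h0 : Nsub.mkQ (ψ l) = 0 := by
      simp only [hψdef, LinearMap.sub_apply, LinearMap.id_apply, LinearMap.comp_apply, map_sub]
      have := LinearMap.congr_fun hσ (Nsub.mkQ l)
      simp only [LinearMap.comp_apply, LinearMap.id_apply] at this
      rw [this, sub_self]
    rwa [Submodule.mkQ_apply, Submodule.Quotient.mk_eq_zero] at h0
  have hψS : ∀ l : L, ((ψ l : L) : EuclideanSpace ℝ (Fin n)) ∈ S := by
    intro l
    exact ⟨(ψ l).2, (hNmem (ψ l)).mp (hψmem l)⟩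
  have hψid : ∀ l : L, ((l : L) : EuclideanSpace ℝ (Fin n)) ∈ S → ψ l = l := by
    intro l hl
    have h0 : Nsub.mkQ l = 0 := by
      rw [Submodule.mkQ_apply, Submodule.Quotient.mk_eq_zero]
      exact (hNmem l).mpr hl.2
    simp [hψdef, h0]
  set phi : L →ₗ[ℤ] ℝ :=
    (((innerSL ℝ x).toLinearMap).restrictScalars ℤ) ∘ₗ (L.subtype ∘ₗ ψ) with hphidef
  have hphi : ∀ l : L, phi l = ⟪x, ((ψ l : L) : EuclideanSpace ℝ (Fin n))⟫ := fun l => rfl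
  have key1 : ∀ l : L, ∃ k : ℤ, phi l = (k : ℝ) := fun l => hxZ _ (hψS l)
  have key2 : ∀ l : L, ((l : L) : EuclideanSpace ℝ (Fin n)) ∈ S →
      phi l = ⟪x, (l : EuclideanSpace ℝ (Fin n))⟫ := by
    intro l hl; rw [hphi, hψid l hl]
  -- the basis and the dual vector z
  let b := Module.Free.chooseBasis ℤ L
  let bR := Module.Basis.ofZLatticeBasis ℝ L b
  set F : EuclideanSpace ℝ (Fin n) →ₗ[ℝ] ℝ := ∑ i, phi (b i) • bR.coord i with hFdef
  set z : EuclideanSpace ℝ (Fin n) :=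
    (InnerProductSpace.toDual ℝ (EuclideanSpace ℝ (Fin n))).symm
      (LinearMap.toContinuousLinearMap F) with hzdef
  have hzF : ∀ v, ⟪z, v⟫ = F v := by
    intro v
    rw [hzdef, InnerProductSpace.toDual_symm_apply]
    simp
  have hFl : ∀ l : L, F (l : EuclideanSpace ℝ (Fin n)) = phi l := by
    intro l
    have h1 : F (l : EuclideanSpace ℝ (Fin n)) = ∑ i, phi (b i) * (b.repr l i : ℝ) := by
      rw [hFdef]
      simp only [LinearMap.sum_apply, LinearMap.smul_apply, Module.Basis.coord_apply, smul_eq_mul]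
      refine Finset.sum_congr rfl fun i _ => ?_
      rw [Module.Basis.ofZLatticeBasis_repr_apply]
    have h2 : phi l = ∑ i, (b.repr l i : ℝ) * phi (b i) := by
      conv_lhs => rw [← b.sum_repr l]
      rw [map_sum]
      refine Finset.sum_congr rfl fun i _ => ?_
      rw [map_zsmul, zsmul_eq_mul]
    rw [h1, h2]
    exact Finset.sum_congr rfl fun i _ => mul_comm _ _
  have hzL : z ∈ L := by
    rw [huni]
    intro u hu
    obtain ⟨k, hk⟩ := key1 ⟨u, hu⟩
    exact ⟨k, by rw [hzF, hFl ⟨u, hu⟩]; exact hk⟩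
  have hzS : ∀ u ∈ S, ⟪z, u⟫ = ⟪x, u⟫ := by
    intro u hu
    rw [hzF, hFl ⟨u, hu.1⟩, key2 ⟨u, hu.1⟩ hu]
  -- the difference m lies in the span of the w's
  set m : EuclideanSpace ℝ (Fin n) := z - x with hmdef
  have hmS : ∀ u ∈ S, ⟪u, m⟫ = 0 := by
    intro u hu
    rw [hmdef, inner_sub_right]
    have h1 : ⟪u, z⟫ = ⟪u, x⟫ := by
      rw [real_inner_comm, hzS u hu, real_inner_comm]
    rw [h1, sub_self]
  have hmw : ∀ i : Fin 3, ⟪m, w i⟫ = ⟪z, w i⟫ := by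
    intro i
    rw [hmdef, inner_sub_left, hxw i, sub_zero]
  have hmpW : m = pW m := by
    have htS : m - pW m ∈ Submodule.span ℝ S := hspanT _ (fun i => hF1 m i)
    have htperp : ∀ u ∈ S, ⟪u, m - pW m⟫ = 0 := by
      intro u hu
      rw [inner_sub_right]
      have h2 : ⟪u, pW m⟫ = 0 := by
        rw [hpW]
        simp only [inner_add_right, inner_smul_right, hu.2 0, hu.2 1, hu.2 2]
        ring
      rw [hmS u hu, h2, sub_self]
    have h0 := stmt18_span_inner_zero htperp _ htS
    exact sub_eq_zero.mp ((inner_self_eq_zero (𝕜 := ℝ)).mp h0)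
  -- integer data and the reduction of the glue vector
  obtain ⟨k0, hk0⟩ := (huni z).1 hzL (w 0) (hw 0)
  obtain ⟨k1, hk1⟩ := (huni z).1 hzL (w 1) (hw 1)
  obtain ⟨k2, hk2⟩ := (huni z).1 hzL (w 2) (hw 2)
  have hmw0 : ⟪m, w 0⟫ = (k0 : ℝ) := by rw [hmw 0, hk0]
  have hmw1 : ⟪m, w 1⟫ = (k1 : ℝ) := by rw [hmw 1, hk1]
  have hmw2 : ⟪m, w 2⟫ = (k2 : ℝ) := by rw [hmw 2, hk2]
  have hmw0' : ⟪w 0, m⟫ = (k0 : ℝ) := by rw [hcomm m 0]; exact hmw0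
  have hmw1' : ⟪w 1, m⟫ = (k1 : ℝ) := by rw [hcomm m 1]; exact hmw1
  have hmw2' : ⟪w 2, m⟫ = (k2 : ℝ) := by rw [hcomm m 2]; exact hmw2
  obtain ⟨c1, c2, hA⟩ := stmt18_lemA k0 k1
  obtain ⟨c3, hB⟩ := stmt18_lemB k2
  set D : EuclideanSpace ℝ (Fin n) := c1 • w 0 + c2 • w 1 + c3 • w 2 with hDdef
  have hDL : D ∈ L :=
    L.add_mem (L.add_mem (L.smul_mem _ (hw 0)) (L.smul_mem _ (hw 1))) (L.smul_mem _ (hw 2))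
  have hDcast : D = ((c1 : ℤ) : ℝ) • w 0 + ((c2 : ℤ) : ℝ) • w 1 + ((c3 : ℤ) : ℝ) • w 2 := by
    rw [hDdef]; simp only [Int.cast_smul_eq_zsmul]
  set z' : EuclideanSpace ℝ (Fin n) := z - D with hz'def
  set m' : EuclideanSpace ℝ (Fin n) := m - D with hm'def
  have hz'L : z' ∈ L := L.sub_mem hzL hDL
  have hz'xm : z' = x + m' := by
    rw [hz'def, hm'def, hmdef]
    abel
  -- explicit coefficients of m'
  set b0 : ℝ := (3*(k0:ℝ) - 2*(k1:ℝ))/5 - (c1:ℝ) with hb0def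
  set b1 : ℝ := (3*(k1:ℝ) - 2*(k0:ℝ))/5 - (c2:ℝ) with hb1def
  set b2 : ℝ := (k2:ℝ)/3 - (c3:ℝ) with hb2def
  have hm'c : m' = b0 • w 0 + b1 • w 1 + b2 • w 2 := by
    rw [hm'def, hDcast]
    nth_rewrite 1 [hmpW]
    rw [hpW, hmw0', hmw1', hmw2', hb0def, hb1def, hb2def]
    module
  have hxm' : ⟪x, m'⟫ = 0 := by
    rw [hm'c]
    simp only [inner_add_right, inner_smul_right, hxw 0, hxw 1, hxw 2]
    ring
  have hum' : ∀ u ∈ S, ⟪u, m'⟫ = 0 := by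
    intro u hu
    rw [hm'c]
    simp only [inner_add_right, inner_smul_right, hu.2 0, hu.2 1, hu.2 2]
    ring
  -- the norm of m'
  have hip : ∀ j, ⟪m', w j⟫ = b0 * ⟪w 0, w j⟫ + b1 * ⟪w 1, w j⟫ + b2 * ⟪w 2, w j⟫ := by
    intro j
    rw [hm'c, hexp3]
  have hy0 : ⟪m', w 0⟫ = 3*b0 + 2*b1 := by rw [hip 0, g00, g10, g20]; ring
  have hy1 : ⟪m', w 1⟫ = 2*b0 + 3*b1 := by rw [hip 1, g01, g11, g21]; ring
  have hy2 : ⟪m', w 2⟫ = 3*b2 := by rw [hip 2, g02, g12, g22]; ring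
  have hsq : ⟪m', m'⟫ = b0 * ⟪m', w 0⟫ + b1 * ⟪m', w 1⟫ + b2 * ⟪m', w 2⟫ := by
    nth_rewrite 1 [hm'c]
    rw [inner_add_left, inner_add_left, inner_smul_left, inner_smul_left, inner_smul_left]
    simp only [conj_trivial]
    rw [real_inner_comm (w 0) m', real_inner_comm (w 1) m', real_inner_comm (w 2) m']
  have hAr : 3*((k0:ℝ)-3*c1-2*c2)^2 - 4*((k0:ℝ)-3*c1-2*c2)*((k1:ℝ)-2*c1-3*c2)
      + 3*((k1:ℝ)-2*c1-3*c2)^2 ≤ 3 := by exact_mod_cast hA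
  have hBr : ((k2:ℝ)-3*c3)^2 ≤ 1 := by exact_mod_cast hB
  have hm'norm : ⟪m', m'⟫ ≤ 14/15 := by
    rw [hsq, hy0, hy1, hy2, hb0def, hb1def, hb2def]
    have hkey : ((3*(k0:ℝ) - 2*(k1:ℝ))/5 - (c1:ℝ)) * (3*((3*(k0:ℝ) - 2*(k1:ℝ))/5 - (c1:ℝ)) + 2*((3*(k1:ℝ) - 2*(k0:ℝ))/5 - (c2:ℝ)))
        + ((3*(k1:ℝ) - 2*(k0:ℝ))/5 - (c2:ℝ)) * (2*((3*(k0:ℝ) - 2*(k1:ℝ))/5 - (c1:ℝ)) + 3*((3*(k1:ℝ) - 2*(k0:ℝ))/5 - (c2:ℝ)))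
        + ((k2:ℝ)/3 - (c3:ℝ)) * (3*((k2:ℝ)/3 - (c3:ℝ)))
        = (3*((k0:ℝ)-3*c1-2*c2)^2 - 4*((k0:ℝ)-3*c1-2*c2)*((k1:ℝ)-2*c1-3*c2)
          + 3*((k1:ℝ)-2*c1-3*c2)^2)/5 + (((k2:ℝ)-3*c3)^2)/3 := by
      ring
    rw [hkey]
    linarith
  -- z' is nonzero
  have hz'0 : z' ≠ 0 := by
    intro h
    apply hx0
    have h1 : ⟪x + m', x⟫ = 0 := by rw [← hz'xm, h, inner_zero_left]
    rw [inner_add_left] at h1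
    have h2 : ⟪m', x⟫ = 0 := by rw [real_inner_comm]; exact hxm'
    rw [h2, add_zero] at h1
    exact (inner_self_eq_zero (𝕜 := ℝ)).mp h1
  have hsum : ⟪z', z'⟫ = ⟪x, x⟫ + ⟪m', m'⟫ := by
    rw [hz'xm, real_inner_add_add_self, hxm']
    ring
  exact ⟨z', m', hz'L, hz'xm, hz'0, hsum, hm'norm, hxspan, hum'⟩

/-- Let `L` be a unimodular lattice of minimal norm at least 2 and `M = ⟨w 0, w 1, w 2⟩ ≤ L`
a sublattice with Gram matrix `!![3,2,0;2,3,0;0,0,3]`.  With `M^⊥` the orthogonal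
complement of `M` in `L` and `ρ` the orthogonal projection onto `M^⊥ ⊗ ℚ` (its real span),
every nonzero `x ∈ (M^⊥)*` has norm at least `16/15`, and if moreover its norm is at
most `2` then `x = ρ(x')` for some `x' ∈ L` of norm exactly `2`. -/
theorem stmt_18 (n : ℕ) (L : Submodule ℤ (EuclideanSpace ℝ (Fin n)))
    (hfull : Submodule.span ℝ (L : Set (EuclideanSpace ℝ (Fin n))) = ⊤)
    (huni : ∀ v : EuclideanSpace ℝ (Fin n),
      v ∈ L ↔ ∀ u ∈ L, ∃ k : ℤ, ⟪v, u⟫ = (k : ℝ))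
    (hmin : ∀ v ∈ L, v ≠ (0 : EuclideanSpace ℝ (Fin n)) → (2 : ℝ) ≤ ⟪v, v⟫)
    (w : Fin 3 → EuclideanSpace ℝ (Fin n)) (hw : ∀ i, w i ∈ L)
    (hGram : ∀ i j, ⟪w i, w j⟫ = (!![3, 2, 0; 2, 3, 0; 0, 0, 3] : Matrix (Fin 3) (Fin 3) ℝ) i j) :
    (∀ x ∈ dualLat {v | v ∈ L ∧ ∀ i, ⟪v, w i⟫ = 0},
      x ≠ (0 : EuclideanSpace ℝ (Fin n)) → 16 / 15 ≤ ⟪x, x⟫) ∧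
    (∀ x ∈ dualLat {v | v ∈ L ∧ ∀ i, ⟪v, w i⟫ = 0},
      x ≠ (0 : EuclideanSpace ℝ (Fin n)) → ⟪x, x⟫ ≤ 2 →
      ∃ x' ∈ L, ⟪x', x'⟫ = (2 : ℝ) ∧
        ((Submodule.orthogonalProjectionOnto
            (Submodule.span ℝ {v | v ∈ L ∧ ∀ i, ⟪v, w i⟫ = 0}) x' :
          EuclideanSpace ℝ (Fin n)) = x)) := by
  constructor
  · intro x hx hx0
    obtain ⟨z', m', hz'L, hz'xm, hz'0, hsum, hm'norm, hxspan, hum'⟩ :=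
      stmt18_master n L hfull huni w hw hGram x hx hx0
    have h2 := hmin z' hz'L hz'0
    rw [hsum] at h2
    linarith
  · intro x hx hx0 hx2
    obtain ⟨z', m', hz'L, hz'xm, hz'0, hsum, hm'norm, hxspan, hum'⟩ :=
      stmt18_master n L hfull huni w hw hGram x hx hx0
    have h2 := hmin z' hz'L hz'0
    obtain ⟨K, hK⟩ := (huni z').1 hz'L z' hz'L
    have hK2 : K = 2 := by
      have h3 : (K : ℝ) < 3 := by rw [← hK, hsum]; linarith
      have h4 : (2 : ℝ) ≤ (K : ℝ) := hK ▸ h2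
      have h5 : (2 : ℤ) ≤ K := by exact_mod_cast h4
      have h6 : K < 3 := by exact_mod_cast h3
      omega
    refine ⟨z', hz'L, by rw [hK, hK2]; norm_num, ?_⟩
    have hm'perp : m' ∈ (Submodule.span ℝ {v | v ∈ L ∧ ∀ i, ⟪v, w i⟫ = 0})ᗮ := by
      rw [Submodule.mem_orthogonal]
      intro u hu
      exact stmt18_span_inner_zero hum' u hu
    rw [hz'xm, map_add, Submodule.coe_add,
      Submodule.orthogonalProjectionOnto_apply_of_mem_orthogonal hm'perp,
      Submodule.orthogonalProjectionOnto_mem_subspace_eq_self (⟨x, hxspan⟩ : _)]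
    simp
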